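/- For any solution x of the EigenAnt dynamics with positive initial conditions, the sum S(t) := Σ_{j=1}^n x_j(t) satisfies (β d_n)/α ≤ liminf_{t→∞} S(t) ≤ limsup_{t→∞} S(t) ≤ (β d_1)/α. In particular S is uniformly bounded from above and bounded away from zero on [T,∞) for some T ≥ 0. -/

import Mathlib

open Filter MeasureTheory Set Real Topology

lemma comp_lemma (α b : ℝ) (hα : 0 < α) (f : ℝ → ℝ) (f' : ℝ → ℝ)
    (hf : ∀ t, 0 ≤ t → HasDerivAt f (f' t) t)
    (hle : ∀ t, 0 ≤ t → f' t ≤ -α * f t + b) :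
    ∀ t, 0 ≤ t → f t ≤ b / α + (f 0 - b / α) * Real.exp (-(α * t)) := by
  set u : ℝ → ℝ := fun t => (f t - b / α) * Real.exp (α * t) with hu
  have hu' : ∀ t, 0 ≤ t → HasDerivAt u ((f' t + α * f t - b) * Real.exp (α * t)) t := by
    intro t ht
    have h1 : HasDerivAt (fun s => f s - b / α) (f' t) t := (hf t ht).sub_const _
    have h2 : HasDerivAt (fun s : ℝ => Real.exp (α * s)) (Real.exp (α * t) * α) t :=
      (Real.hasDerivAt_exp (α * t)).comp t (by simpa using (hasDerivAt_id t).const_mul α)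
    have h3 : HasDerivAt u _ t := h1.mul h2
    convert h3 using 1
    field_simp [hα.ne']
    ring
  have hanti : AntitoneOn u (Ici (0:ℝ)) := by
    apply antitoneOn_of_deriv_nonpos (convex_Ici 0)
    · intro t ht; exact (hu' t ht).continuousAt.continuousWithinAt
    · intro t ht
      rw [interior_Ici] at ht
      exact ((hu' t ht.le).differentiableAt).differentiableWithinAt
    · intro t ht
      rw [interior_Ici] at ht
      rw [(hu' t ht.le).deriv]
      have := hle t ht.le
      nlinarith [Real.exp_pos (α * t)]
  intro t ht
  have h4 : u t ≤ u 0 := hanti (self_mem_Ici) ht ht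
  have h5 : (f t - b / α) * Real.exp (α * t) ≤ (f 0 - b / α) := by
    simpa [hu] using h4
  have h7 : Real.exp (α * t) * Real.exp (-(α * t)) = 1 := by
    rw [← Real.exp_add]; simp
  have h8 := mul_le_mul_of_nonneg_right h5 (le_of_lt (Real.exp_pos (-(α * t))))
  rw [mul_assoc, h7, mul_one] at h8
  linarith

theorem stmt4
    (n : ℕ) (hn : 0 < n) (α β : ℝ) (hα : 0 < α) (hβ : 0 < β)
    (d : Fin n → ℝ) (hd : ∀ i j : Fin n, i ≤ j → d j ≤ d i) (hdpos : ∀ i, 0 < d i)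
    (x : ℝ → Fin n → ℝ)
    (hS : ∀ t : ℝ, 0 ≤ t → (∑ j, x t j) ≠ 0)
    (hode : ∀ (i : Fin n) (t : ℝ), 0 ≤ t →
      HasDerivAt (fun s => x s i) ((-α + β * d i / (∑ j, x t j)) * x t i) t)
    (hx0 : ∀ i, 0 < x 0 i)
    :
    β * d ⟨n - 1, by omega⟩ / α ≤ Filter.liminf (fun t => ∑ j, x t j) Filter.atTop ∧
    Filter.liminf (fun t => ∑ j, x t j) Filter.atTop ≤
      Filter.limsup (fun t => ∑ j, x t j) Filter.atTop ∧
    Filter.limsup (fun t => ∑ j, x t j) Filter.atTop ≤ β * d ⟨0, hn⟩ / α ∧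
    (∃ M : ℝ, ∀ t : ℝ, 0 ≤ t → ∑ j, x t j ≤ M) ∧
    (∃ T : ℝ, 0 ≤ T ∧ ∃ ε : ℝ, 0 < ε ∧ ∀ t : ℝ, T ≤ t → ε ≤ ∑ j, x t j) := by
  classical
  have hne : Nonempty (Fin n) := ⟨⟨0, hn⟩⟩
  set S : ℝ → ℝ := fun t => ∑ j, x t j with hSdef
  have hS' : ∀ t, 0 ≤ t → HasDerivAt S (∑ i, (-α + β * d i / S t) * x t i) t := by
    intro t ht
    exact HasDerivAt.fun_sum (fun i _ => hode i t ht)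
  have hScont : ∀ t : ℝ, 0 ≤ t → ContinuousAt S t := fun t ht => (hS' t ht).continuousAt
  have hMc : Continuous (fun t : ℝ => S (max t 0)) := by
    rw [continuous_iff_continuousAt]
    intro t
    have hmaxc : ContinuousAt (fun s : ℝ => max s 0) t :=
      (continuous_id.max continuous_const).continuousAt
    exact show ContinuousAt (S ∘ fun s : ℝ => max s 0) t from
      ContinuousAt.comp (hScont _ (le_max_right t 0)) hmaxc
  -- positivity of each coordinate
  have hxpos : ∀ t, 0 ≤ t → ∀ i, 0 < x t i := by
    intro t ht i
    set g : ℝ → ℝ := fun s => -α + β * d i / S (max s 0) with hg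
    have hgc : Continuous g :=
      continuous_const.add (continuous_const.div hMc (fun s => hS _ (le_max_right s 0)))
    set G : ℝ → ℝ := fun s => ∫ r in (0:ℝ)..s, g r with hGdef
    have hG : ∀ s : ℝ, HasDerivAt G (g s) s := by
      intro s
      exact intervalIntegral.integral_hasDerivAt_right (hgc.intervalIntegrable 0 s)
        hgc.stronglyMeasurable.stronglyMeasurableAtFilter hgc.continuousAt
    set h : ℝ → ℝ := fun s => x s i * Real.exp (-(G s)) with hhdef
    have hh' : ∀ s, 0 ≤ s → HasDerivAt h 0 s := by
      intro s hs
      have h1 : HasDerivAt (fun r => x r i) (g s * x s i) s := by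
        have := hode i s hs
        simp only [hg, max_eq_left hs]
        exact this
      have h2 : HasDerivAt (fun r => Real.exp (-(G r))) (Real.exp (-(G s)) * (-(g s))) s :=
        (Real.hasDerivAt_exp _).comp s ((hG s).neg)
      have h3 : HasDerivAt h _ s := h1.mul h2
      convert h3 using 1
      ring
    have hconst := constant_of_has_deriv_right_zero (f := h) (a := 0) (b := t)
      (fun s hs => ((hh' s hs.1).continuousAt.continuousWithinAt))
      (fun s hs => (hh' s hs.1).hasDerivWithinAt) t (right_mem_Icc.mpr ht)
    have e1 : x t i * Real.exp (-(G t)) = x 0 i := by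
      have e0 : G 0 = 0 := intervalIntegral.integral_same
      simpa [hhdef, e0] using hconst
    nlinarith [Real.exp_pos (-(G t)), hx0 i]
  have hSpos : ∀ t, 0 ≤ t → 0 < S t := by
    intro t ht
    exact Finset.sum_pos (fun i _ => hxpos t ht i) Finset.univ_nonempty
  -- rewrite the derivative
  have hkey : ∀ t, 0 ≤ t →
      (∑ i, (-α + β * d i / S t) * x t i) = -α * S t + (β / S t) * ∑ i, d i * x t i := by
    intro t ht
    have hS0 : S t ≠ 0 := (hSpos t ht).ne'
    have : ∀ i : Fin n, (-α + β * d i / S t) * x t i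
        = -α * x t i + (β / S t) * (d i * x t i) := by
      intro i; field_simp
    rw [Finset.sum_congr rfl (fun i _ => this i), Finset.sum_add_distrib,
      ← Finset.mul_sum, ← Finset.mul_sum]
  have hub : ∀ t, 0 ≤ t → (∑ i, d i * x t i) ≤ d ⟨0, hn⟩ * S t := by
    intro t ht
    rw [hSdef, Finset.mul_sum]
    apply Finset.sum_le_sum
    intro i _
    exact mul_le_mul_of_nonneg_right
      (hd ⟨0, hn⟩ i (by simp [Fin.le_def])) (hxpos t ht i).le
  have hlb : ∀ t, 0 ≤ t → d ⟨n - 1, by omega⟩ * S t ≤ (∑ i, d i * x t i) := by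
    intro t ht
    rw [hSdef, Finset.mul_sum]
    apply Finset.sum_le_sum
    intro i _
    refine mul_le_mul_of_nonneg_right (hd i ⟨n - 1, by omega⟩ ?_) (hxpos t ht i).le
    have := i.isLt
    simp only [Fin.le_def]
    omega
  -- upper comparison
  have hineq1 : ∀ t, 0 ≤ t → (∑ i, (-α + β * d i / S t) * x t i) ≤ -α * S t + β * d ⟨0, hn⟩ := by
    intro t ht
    rw [hkey t ht]
    have h1 := hub t ht
    have hSp := hSpos t ht
    have h2 : (β / S t) * (∑ i, d i * x t i) ≤ (β / S t) * (d ⟨0, hn⟩ * S t) :=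
      mul_le_mul_of_nonneg_left h1 (div_nonneg hβ.le hSp.le)
    have h3 : (β / S t) * (d ⟨0, hn⟩ * S t) = β * d ⟨0, hn⟩ := by
      field_simp
    linarith
  have hup := comp_lemma α (β * d ⟨0, hn⟩) hα S (fun t => ∑ i, (-α + β * d i / S t) * x t i)
    hS' hineq1
  -- lower comparison
  have hineq2 : ∀ t, 0 ≤ t → -(∑ i, (-α + β * d i / S t) * x t i)
      ≤ -α * (-S t) + -(β * d ⟨n - 1, by omega⟩) := by
    intro t ht
    rw [hkey t ht]
    have h1 := hlb t ht
    have hSp := hSpos t ht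
    have h2 : (β / S t) * (d ⟨n - 1, by omega⟩ * S t) ≤ (β / S t) * (∑ i, d i * x t i) :=
      mul_le_mul_of_nonneg_left h1 (div_nonneg hβ.le hSp.le)
    have h3 : (β / S t) * (d ⟨n - 1, by omega⟩ * S t) = β * d ⟨n - 1, by omega⟩ := by
      field_simp
    linarith
  have hlow' := comp_lemma α (-(β * d ⟨n - 1, by omega⟩)) hα (fun t => -S t)
    (fun t => -(∑ i, (-α + β * d i / S t) * x t i)) (fun t ht => (hS' t ht).neg) hineq2
  set cl : ℝ := β * d ⟨n - 1, by omega⟩ / α with hcl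
  set ch : ℝ := β * d ⟨0, hn⟩ / α with hch
  have hlow : ∀ t, 0 ≤ t → cl + (S 0 - cl) * Real.exp (-(α * t)) ≤ S t := by
    intro t ht
    have h := hlow' t ht
    simp only [neg_div] at h
    nlinarith [h]
  have hupS : ∀ t, 0 ≤ t → S t ≤ ch + (S 0 - ch) * Real.exp (-(α * t)) := hup
  have hclpos : 0 < cl := div_pos (mul_pos hβ (hdpos _)) hα
  have hchpos : 0 < ch := div_pos (mul_pos hβ (hdpos _)) hα
  -- uniform bounds
  have hMbound : ∀ t, 0 ≤ t → S t ≤ max (S 0) ch := by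
    intro t ht
    have h := hupS t ht
    have he1 : Real.exp (-(α * t)) ≤ 1 := Real.exp_le_one_iff.mpr (by nlinarith)
    have he0 : 0 < Real.exp (-(α * t)) := Real.exp_pos _
    rcases le_total (S 0) ch with hc | hc
    · have : S t ≤ ch := by nlinarith
      exact this.trans (le_max_right _ _)
    · have : S t ≤ S 0 := by nlinarith
      exact this.trans (le_max_left _ _)
  have hεbound : ∀ t, 0 ≤ t → min (S 0) cl ≤ S t := by
    intro t ht
    have h := hlow t ht
    have he1 : Real.exp (-(α * t)) ≤ 1 := Real.exp_le_one_iff.mpr (by nlinarith)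
    have he0 : 0 < Real.exp (-(α * t)) := Real.exp_pos _
    rcases le_total (S 0) cl with hc | hc
    · have : S 0 ≤ S t := by nlinarith
      exact (min_le_left _ _).trans this
    · have : cl ≤ S t := by nlinarith
      exact (min_le_right _ _).trans this
  -- tendsto facts
  have hexp : Tendsto (fun t : ℝ => Real.exp (-(α * t))) atTop (𝓝 0) :=
    Real.tendsto_exp_neg_atTop_nhds_zero.comp (tendsto_id.const_mul_atTop hα)
  have htendU : Tendsto (fun t => ch + (S 0 - ch) * Real.exp (-(α * t))) atTop (𝓝 ch) := by
    have h0 : Tendsto (fun t : ℝ => (S 0 - ch) * Real.exp (-(α * t))) atTop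
        (𝓝 ((S 0 - ch) * 0)) := hexp.const_mul _
    have h1 := (tendsto_const_nhds (x := ch) (f := (atTop : Filter ℝ))).add h0
    simpa using h1
  have htendL : Tendsto (fun t => cl + (S 0 - cl) * Real.exp (-(α * t))) atTop (𝓝 cl) := by
    have h0 : Tendsto (fun t : ℝ => (S 0 - cl) * Real.exp (-(α * t))) atTop
        (𝓝 ((S 0 - cl) * 0)) := hexp.const_mul _
    have h1 := (tendsto_const_nhds (x := cl) (f := (atTop : Filter ℝ))).add h0
    simpa using h1
  have hevle : ∀ᶠ t in atTop, S t ≤ ch + (S 0 - ch) * Real.exp (-(α * t)) :=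
    (eventually_ge_atTop 0).mono (fun t ht => hupS t ht)
  have hevge : ∀ᶠ t in atTop, cl + (S 0 - cl) * Real.exp (-(α * t)) ≤ S t :=
    (eventually_ge_atTop 0).mono (fun t ht => hlow t ht)
  have hBle : IsBoundedUnder (· ≤ ·) atTop S :=
    isBoundedUnder_of_eventually_le ((eventually_ge_atTop 0).mono (fun t ht => hMbound t ht))
  have hBge : IsBoundedUnder (· ≥ ·) atTop S :=
    isBoundedUnder_of_eventually_ge ((eventually_ge_atTop 0).mono (fun t ht => hεbound t ht))
  have hls : limsup S atTop ≤ ch := by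
    have h1 : limsup S atTop ≤ limsup (fun t => ch + (S 0 - ch) * Real.exp (-(α * t))) atTop :=
      limsup_le_limsup hevle hBge.isCoboundedUnder_le htendU.isBoundedUnder_le
    rwa [htendU.limsup_eq] at h1
  have hli : cl ≤ liminf S atTop := by
    have h1 : liminf (fun t => cl + (S 0 - cl) * Real.exp (-(α * t))) atTop ≤ liminf S atTop :=
      liminf_le_liminf hevge htendL.isBoundedUnder_ge hBle.isCoboundedUnder_ge
    rwa [htendL.liminf_eq] at h1
  refine ⟨hli, liminf_le_limsup hBle hBge, hls, ⟨max (S 0) ch, hMbound⟩,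
    ⟨0, le_refl 0, min (S 0) cl, lt_min (hSpos 0 le_rfl) hclpos, fun t ht => hεbound t ht⟩⟩
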